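/- Define the Harris–Sevastyanov transform f̃(s) := (f(s(1−q)+q) − q)/(1−q) for s ∈ [0,1]. Then f̃(s) = ∑_{k≥0} p̃_k s^k where p̃_0 = 0 and p̃_k := ∑_{i≥k} p_i (i choose k) q^{i−k} (1−q)^{k−1} for k ≥ 1; the coefficients satisfy p̃_k ≥ 0 and ∑_{k≥1} p̃_k = 1; if M := f'(1) = ∑_k k p_k < ∞ then f̃'(1) = M; and for every n ≥ 0 the n-th functional iterate satisfies f̃^{(n)}(s) = (f^{(n)}(s(1−q)+q) − q)/(1−q) for all s ∈ [0,1]. -/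

import Mathlib

open Filter Topology

-- key expansion lemma
lemma hs_key
    (p : ℕ → ℝ) (hp : ∀ k, 0 ≤ p k) (hpsum : Summable p)
    (f : ℝ → ℝ) (hf : ∀ s, f s = ∑' k, p k * s ^ k)
    (q : ℝ) (hq0 : 0 < q) (hq1 : q < 1) (hfix : f q = q)
    (ptilde : ℕ → ℝ) (hpt0 : ptilde 0 = 0)
    (hptk : ∀ k : ℕ, ptilde (k + 1)
        = ∑' i : ℕ, p (i + (k + 1)) * ((i + (k + 1)).choose (k + 1) : ℝ)
            * q ^ i * (1 - q) ^ k)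
    (s : ℝ) (hs0 : 0 ≤ s) (hs1 : s ≤ 1) :
    Summable (fun k => ptilde k * s ^ k) ∧
      f (s * (1 - q) + q) = q + (1 - q) * ∑' k, ptilde k * s ^ k := by
  have hc : (0:ℝ) < 1 - q := by linarith
  have hc0 : (1:ℝ) - q ≠ 0 := ne_of_gt hc
  set t := s * (1 - q) + q with ht
  have ht0 : 0 ≤ t := by nlinarith
  have ht1 : t ≤ 1 := by nlinarith
  set T : ℕ → ℕ → ℝ :=
    fun i k => p i * (((i.choose k : ℕ) : ℝ) * ((s * (1 - q)) ^ k * q ^ (i - k))) with hT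
  have hTnn : ∀ i k, 0 ≤ T i k := by
    intro i k
    have h1 : 0 ≤ s * (1 - q) := by positivity
    have h2 := hp i
    positivity
  have hrow : ∀ i, HasSum (fun k => T i k) (p i * t ^ i) := by
    intro i
    have hfin : ∀ k ∉ Finset.range (i + 1), T i k = 0 := by
      intro k hk
      simp only [Finset.mem_range, not_lt] at hk
      have : i.choose k = 0 := Nat.choose_eq_zero_of_lt (by omega)
      simp [hT, this]
    have h : HasSum (fun k => T i k) _ := hasSum_sum_of_ne_finset_zero hfin
    convert h using 1
    rw [ht, add_pow, Finset.mul_sum]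
    refine Finset.sum_congr rfl fun k _ => ?_
    ring
  have hFsum : Summable (fun x : ℕ × ℕ => T x.1 x.2) := by
    refine (summable_prod_of_nonneg (fun x => hTnn x.1 x.2)).2 ⟨fun i => (hrow i).summable, ?_⟩
    have he : (fun i => ∑' k, T i k) = fun i => p i * t ^ i :=
      funext fun i => (hrow i).tsum_eq
    rw [he]
    refine Summable.of_nonneg_of_le (fun k => by have := hp k; positivity) (fun k => ?_) hpsum
    calc p k * t ^ k ≤ p k * 1 := mul_le_mul_of_nonneg_left (pow_le_one₀ ht0 ht1) (hp k)
      _ = p k := mul_one _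
  have hcols := (summable_prod_of_nonneg
      (fun x : ℕ × ℕ => hTnn x.2 x.1)).1 hFsum.prod_symm
  have hcol_sum : ∀ k, Summable (fun i => T i k) := hcols.1
  have hCsum : Summable (fun k => ∑' i, T i k) := hcols.2
  have hswap : ∑' k, ∑' i, T i k = ∑' i, ∑' k, T i k :=
    hFsum.tsum_comm' (fun i => (hrow i).summable) hcol_sum
  have hft : f t = ∑' k, ∑' i, T i k := by
    rw [hf, hswap]
    exact tsum_congr fun i => (hrow i).tsum_eq.symm
  have hC0 : ∑' i, T i 0 = q := by
    have : (fun i => T i 0) = fun i => p i * q ^ i := by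
      funext i; simp [hT]
    rw [this, ← hf q, hfix]
  have hCk : ∀ k : ℕ, ∑' i, T i (k + 1) = ptilde (k + 1) * ((1 - q) * s ^ (k + 1)) := by
    intro k
    have hvan : ∑ i ∈ Finset.range (k + 1), T i (k + 1) = 0 := by
      refine Finset.sum_eq_zero fun i hi => ?_
      simp only [Finset.mem_range] at hi
      have : i.choose (k + 1) = 0 := Nat.choose_eq_zero_of_lt (by omega)
      simp [hT, this]
    have hshift := (hcol_sum (k + 1)).sum_add_tsum_nat_add (k + 1)
    rw [hvan, zero_add] at hshift
    rw [← hshift]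
    have he : (fun i => T (i + (k + 1)) (k + 1))
        = fun i => (p (i + (k + 1)) * ((i + (k + 1)).choose (k + 1) : ℝ)
            * q ^ i * (1 - q) ^ k) * ((1 - q) * s ^ (k + 1)) := by
      funext i
      have hsub : i + (k + 1) - (k + 1) = i := by omega
      simp only [hT, hsub, mul_pow]
      ring
    rw [he, tsum_mul_right, ← hptk k]
  -- summability of ptilde k * s^k
  have hCsucc : Summable (fun k => ∑' i, T i (k + 1)) := (summable_nat_add_iff 1).2 hCsum
  have hsum_shift : Summable (fun k => ptilde (k + 1) * s ^ (k + 1)) := by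
    refine (hCsucc.mul_right (1 - q)⁻¹).congr fun k => ?_
    rw [hCk k]
    field_simp
  have hfull : Summable (fun k => ptilde k * s ^ k) := (summable_nat_add_iff 1).1 hsum_shift
  refine ⟨hfull, ?_⟩
  have hsh : ∑' k, ptilde k * s ^ k = ∑' k, ptilde (k + 1) * s ^ (k + 1) := by
    rw [hfull.tsum_eq_zero_add, hpt0]
    simp
  rw [hft, hCsum.tsum_eq_zero_add, hC0, hsh]
  congr 1
  rw [← tsum_mul_left]
  exact tsum_congr fun k => by rw [hCk k]; ring
lemma hs_deriv
    (p : ℕ → ℝ) (hp : ∀ k, 0 ≤ p k) (hpsum : Summable p) (hp1 : ∑' k, p k = 1)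
    (f : ℝ → ℝ) (hf : ∀ s, f s = ∑' k, p k * s ^ k)
    (hM : Summable (fun k : ℕ => (k : ℝ) * p k)) :
    HasDerivWithinAt f (∑' k : ℕ, (k : ℝ) * p k) (Set.Icc (0:ℝ) 1) 1 := by
  have hf1 : f 1 = 1 := by rw [hf]; simpa using hp1
  rw [hasDerivWithinAt_iff_tendsto_slope]
  have hev : slope f 1 =ᶠ[𝓝[Set.Icc (0:ℝ) 1 \ {1}] 1]
      fun x => ∑' k, p k * ∑ j ∈ Finset.range k, x ^ j := by
    filter_upwards [self_mem_nhdsWithin] with x hx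
    obtain ⟨⟨hx0, hx1⟩, hxne⟩ := hx
    have hxne1 : x ≠ 1 := by simpa using hxne
    have hsum_pow : Summable (fun k => p k * x ^ k) := by
      refine Summable.of_nonneg_of_le (fun k => by have := hp k; positivity) (fun k => ?_) hpsum
      calc p k * x ^ k ≤ p k * 1 := mul_le_mul_of_nonneg_left (pow_le_one₀ hx0 hx1) (hp k)
        _ = p k := mul_one _
    have h1 : f x - f 1 = ∑' k, (p k * x ^ k - p k) := by
      rw [hf x, hf1, ← hp1, hsum_pow.tsum_sub hpsum]
    have hdiff : f x - f 1 = (∑' k, p k * ∑ j ∈ Finset.range k, x ^ j) * (x - 1) := by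
      rw [h1, ← tsum_mul_right]
      refine tsum_congr fun k => ?_
      rw [mul_assoc, geom_sum_mul]
      ring
    rw [slope_def_field, hdiff, mul_div_cancel_right₀ _ (sub_ne_zero.2 hxne1)]
  rw [tendsto_congr' hev]
  apply tendsto_tsum_of_dominated_convergence (bound := fun k : ℕ => (k : ℝ) * p k) hM
  · intro k
    have hcont : Tendsto (fun x : ℝ => p k * ∑ j ∈ Finset.range k, x ^ j) (𝓝 1)
        (𝓝 (p k * ∑ j ∈ Finset.range k, (1:ℝ) ^ j)) := by
      exact ((continuous_const.mul (continuous_finset_sum _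
        (fun j _ => continuous_pow j))).tendsto 1)
    simp only [one_pow, Finset.sum_const, Finset.card_range, nsmul_eq_mul, mul_one] at hcont
    rw [mul_comm ((k:ℝ)) (p k)]
    exact hcont.mono_left nhdsWithin_le_nhds
  · filter_upwards [self_mem_nhdsWithin] with x hx k
    obtain ⟨⟨hx0, hx1⟩, _⟩ := hx
    have hS0 : 0 ≤ ∑ j ∈ Finset.range k, x ^ j :=
      Finset.sum_nonneg fun j _ => pow_nonneg hx0 j
    have hSk : ∑ j ∈ Finset.range k, x ^ j ≤ (k : ℝ) := by
      calc ∑ j ∈ Finset.range k, x ^ j ≤ ∑ _j ∈ Finset.range k, (1:ℝ) :=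
            Finset.sum_le_sum fun j _ => pow_le_one₀ hx0 hx1
        _ = (k : ℝ) := by simp
    rw [Real.norm_eq_abs, abs_of_nonneg (mul_nonneg (hp k) hS0), mul_comm ((k:ℝ)) (p k)]
    exact mul_le_mul_of_nonneg_left hSk (hp k)




/-- the Harris–Sevastyanov transform `f̃(s) = (f(s(1-q)+q) - q)/(1-q)` equals
`∑_k p̃_k s^k` where `p̃_0 = 0` and `p̃_k = ∑_{i≥k} p_i (i choose k) q^{i-k} (1-q)^{k-1}` for
`k ≥ 1`; the `p̃_k` are nonnegative and sum to one; if `M := ∑_k k p_k < ∞` then `f̃'(1) = M`;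
and `f̃⁽ⁿ⁾(s) = (f⁽ⁿ⁾(s(1-q)+q) - q)/(1-q)` for all `n` and `s ∈ [0,1]`. -/
theorem harris_sevastyanov_single_type
    (p : ℕ → ℝ) (hp : ∀ k, 0 ≤ p k) (hpsum : Summable p) (hp1 : ∑' k, p k = 1)
    (f : ℝ → ℝ) (hf : ∀ s, f s = ∑' k, p k * s ^ k)
    (q : ℝ) (hq0 : 0 < q) (hq1 : q < 1) (hfix : f q = q)
    (ptilde : ℕ → ℝ) (hpt0 : ptilde 0 = 0)
    (hptk : ∀ k : ℕ, ptilde (k + 1)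
        = ∑' i : ℕ, p (i + (k + 1)) * ((i + (k + 1)).choose (k + 1) : ℝ)
            * q ^ i * (1 - q) ^ k) :
    (∀ s ∈ Set.Icc (0:ℝ) 1,
        (f (s * (1 - q) + q) - q) / (1 - q) = ∑' k, ptilde k * s ^ k)
    ∧ (∀ k, 0 ≤ ptilde k)
    ∧ (∑' k, ptilde k = 1)
    ∧ (Summable (fun k : ℕ => (k : ℝ) * p k) →
        HasDerivWithinAt (fun s => (f (s * (1 - q) + q) - q) / (1 - q))
          (∑' k : ℕ, (k : ℝ) * p k) (Set.Icc (0:ℝ) 1) 1)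
    ∧ ∀ n : ℕ, ∀ s ∈ Set.Icc (0:ℝ) 1,
        (fun x => (f (x * (1 - q) + q) - q) / (1 - q))^[n] s
          = (f^[n] (s * (1 - q) + q) - q) / (1 - q) := by
  have hc : (0:ℝ) < 1 - q := by linarith
  have hc0 : (1:ℝ) - q ≠ 0 := ne_of_gt hc
  have key := fun (s : ℝ) (hs0 : 0 ≤ s) (hs1 : s ≤ 1) =>
    hs_key p hp hpsum f hf q hq0 hq1 hfix ptilde hpt0 hptk s hs0 hs1
  have part1 : ∀ s ∈ Set.Icc (0:ℝ) 1,
      (f (s * (1 - q) + q) - q) / (1 - q) = ∑' k, ptilde k * s ^ k := by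
    rintro s ⟨hs0, hs1⟩
    rw [(key s hs0 hs1).2]
    field_simp
    ring
  have part2 : ∀ k, 0 ≤ ptilde k := by
    intro k
    cases k with
    | zero => simp [hpt0]
    | succ k =>
      rw [hptk]
      refine tsum_nonneg fun i => ?_
      exact mul_nonneg (mul_nonneg (mul_nonneg (hp _) (Nat.cast_nonneg _))
        (pow_nonneg hq0.le _)) (pow_nonneg hc.le _)
  have hf1 : f 1 = 1 := by rw [hf]; simpa using hp1
  have part3 : ∑' k, ptilde k = 1 := by
    have h1 := part1 1 ⟨zero_le_one, le_rfl⟩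
    rw [show (1:ℝ) * (1 - q) + q = 1 by ring, hf1, div_self hc0] at h1
    simpa using h1.symm
  have hsumptilde : Summable ptilde := by
    have h := (key 1 zero_le_one le_rfl).1
    simpa using h
  refine ⟨part1, part2, part3, ?_, ?_⟩
  · intro hM
    have hd := hs_deriv p hp hpsum hp1 f hf hM
    have hL : HasDerivWithinAt (fun s : ℝ => s * (1 - q) + q) (1 - q) (Set.Icc (0:ℝ) 1) 1 := by
      simpa using (((hasDerivAt_id (1:ℝ)).mul_const (1 - q)).add_const q).hasDerivWithinAt
    have hmaps : Set.MapsTo (fun s : ℝ => s * (1 - q) + q) (Set.Icc 0 1) (Set.Icc 0 1) := by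
      rintro x ⟨hx0, hx1⟩
      constructor
      · show (0:ℝ) ≤ x * (1 - q) + q
        nlinarith
      · show x * (1 - q) + q ≤ 1
        nlinarith
    have hd' : HasDerivWithinAt f (∑' k : ℕ, (k : ℝ) * p k) (Set.Icc (0:ℝ) 1)
        ((fun s : ℝ => s * (1 - q) + q) 1) := by
      have h1 : (fun s : ℝ => s * (1 - q) + q) 1 = 1 := by norm_num
      rw [h1]
      exact hd
    have hcomp := hd'.comp 1 hL hmaps
    have hfinal := (hcomp.sub_const q).div_const (1 - q)
    have hval : (∑' k : ℕ, (k : ℝ) * p k) * (1 - q) / (1 - q) = ∑' k : ℕ, (k : ℝ) * p k := by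
      field_simp
    rw [hval] at hfinal
    exact hfinal
  · have gmem : ∀ s ∈ Set.Icc (0:ℝ) 1,
        (f (s * (1 - q) + q) - q) / (1 - q) ∈ Set.Icc (0:ℝ) 1 := by
      rintro s ⟨hs0, hs1⟩
      rw [part1 s ⟨hs0, hs1⟩]
      constructor
      · exact tsum_nonneg fun k => mul_nonneg (part2 k) (pow_nonneg hs0 k)
      · calc ∑' k, ptilde k * s ^ k ≤ ∑' k, ptilde k := by
              refine Summable.tsum_le_tsum (fun k => ?_) (key s hs0 hs1).1 hsumptilde
              calc ptilde k * s ^ k ≤ ptilde k * 1 :=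
                    mul_le_mul_of_nonneg_left (pow_le_one₀ hs0 hs1) (part2 k)
                _ = ptilde k := mul_one _
          _ = 1 := part3
    intro n
    induction n with
    | zero =>
      rintro s ⟨hs0, hs1⟩
      simp only [Function.iterate_zero, id_eq]
      field_simp
      ring
    | succ n ih =>
      intro s hs
      rw [Function.iterate_succ_apply, Function.iterate_succ_apply,
        ih _ (gmem s hs)]
      have heq : (f (s * (1 - q) + q) - q) / (1 - q) * (1 - q) + q = f (s * (1 - q) + q) := by
        field_simp
        ring
      show (f^[n] ((f (s * (1 - q) + q) - q) / (1 - q) * (1 - q) + q) - q) / (1 - q) = _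
      rw [heq]
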